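/- Let H be a real Hilbert space with inner product (·,·), a : H × H → ℝ a symmetric coercive bounded bilinear form, and let Π : H → H be an orthogonal projection (with respect to (·,·)). Suppose u₁, u₂ ∈ H satisfy a(u₁, v) = (f, v) and a(u₂, v) = (Πf, v) for all v ∈ H, where f ∈ H. If moreover ‖v − Πv‖ ≤ C_Π ‖v‖_a for all v ∈ H (with ‖·‖_a the energy norm), then ‖u₁ − u₂‖_a ≤ C_Π ‖f − Πf‖. -/

import Mathlib

/-- If u₁, u₂ solve the variational problems with data f and Πf respectively, where Π is an
orthogonal projection satisfying the approximation estimate ‖v − Πv‖ ≤ CPi ‖v‖_a, then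
‖u₁ − u₂‖_a ≤ CPi ‖f − Πf‖. -/
theorem energy_error_projection_data
    {H : Type*} [NormedAddCommGroup H] [InnerProductSpace ℝ H] [CompleteSpace H]
    (a : H → H → ℝ)
    (hsymm : ∀ u v, a u v = a v u)
    (hadd : ∀ u v w, a u (v + w) = a u v + a u w)
    (hsmul : ∀ (c : ℝ) u v, a u (c • v) = c * a u v)
    (M : ℝ) (hbound : ∀ u v, |a u v| ≤ M * ‖u‖ * ‖v‖)
    (α : ℝ) (hα : 0 < α) (hcoer : ∀ v, α * ‖v‖ ^ 2 ≤ a v v)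
    (P : H →ₗ[ℝ] H)
    (hidem : ∀ v, P (P v) = P v)
    (hselfadj : ∀ u v, (inner ℝ (P u) v : ℝ) = inner ℝ u (P v))
    (CPi : ℝ) (hC : 0 < CPi)
    (happrox : ∀ v, ‖v - P v‖ ≤ CPi * Real.sqrt (a v v))
    (f u₁ u₂ : H)
    (hu₁ : ∀ v, a u₁ v = inner ℝ f v)
    (hu₂ : ∀ v, a u₂ v = inner ℝ (P f) v) :
    Real.sqrt (a (u₁ - u₂) (u₁ - u₂)) ≤ CPi * ‖f - P f‖ := by
  set e := u₁ - u₂ with he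
  have hneg : ∀ u v, a u (-v) = -a u v := by
    intro u v
    have := hsmul (-1) u v
    simpa using this
  have hsub : ∀ u v w, a u (v - w) = a u v - a u w := by
    intro u v w
    rw [sub_eq_add_neg, hadd, hneg, sub_eq_add_neg]
  have haee : (0:ℝ) ≤ a e e := le_trans (by positivity) (hcoer e)
  -- a e e = ⟨f - Pf, e⟩
  have h1 : a e e = (inner ℝ (f - P f) e : ℝ) := by
    have : a e e = a u₁ e - a u₂ e := by
      rw [hsymm e e, he, hsub, hsymm u₁ e, hsymm u₂ e]
    rw [this, hu₁, hu₂, inner_sub_left]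
  -- orthogonality: ⟨f - Pf, P e⟩ = 0
  have h2 : (inner ℝ (f - P f) (P e) : ℝ) = 0 := by
    rw [← hselfadj]
    have : P (f - P f) = 0 := by rw [map_sub, hidem, sub_self]
    rw [this, inner_zero_left]
  have h3 : a e e = (inner ℝ (f - P f) (e - P e) : ℝ) := by
    rw [inner_sub_right, h2, sub_zero, h1]
  have h4 : a e e ≤ ‖f - P f‖ * (CPi * Real.sqrt (a e e)) := by
    calc a e e = (inner ℝ (f - P f) (e - P e) : ℝ) := h3
      _ ≤ ‖f - P f‖ * ‖e - P e‖ := real_inner_le_norm _ _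
      _ ≤ ‖f - P f‖ * (CPi * Real.sqrt (a e e)) := by
          exact mul_le_mul_of_nonneg_left (happrox e) (norm_nonneg _)
  set s := Real.sqrt (a e e) with hs
  have hs2 : s * s = a e e := Real.mul_self_sqrt haee
  have hsnn : 0 ≤ s := Real.sqrt_nonneg _
  rcases eq_or_lt_of_le hsnn with h0 | h0
  · rw [← h0]; positivity
  · have : s * s ≤ (CPi * ‖f - P f‖) * s := by
      rw [hs2]; linarith [h4]
    exact le_of_mul_le_mul_right (by linarith) h0
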